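/- Let V be a finite-dimensional real inner product space, let v_1, …, v_m be nonzero vectors in V, and let W be the subgroup of the linear isometries of V generated by the orthogonal reflections s_{v_1}, …, s_{v_m}. Suppose that W permutes the set of hyperplanes {v_1^⊥, …, v_m^⊥}, i.e. for every g ∈ W and every i there is a j with g(v_i^⊥) = v_j^⊥. Then W is finite, and moreover |W| ≤ (2m)!. -/

import Mathlib

/-- Let `V` be a finite-dimensional real inner product space, `v_1, …, v_m` nonzero vectors,
and `W` the subgroup of the linear isometries of `V` generated by the orthogonal reflections
`s_{v_1}, …, s_{v_m}` (where `s_v` is the reflection through the hyperplane `v^⊥`).  If `W`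
permutes the set of hyperplanes `{v_1^⊥, …, v_m^⊥}`, then `W` is finite with `|W| ≤ (2m)!`. -/
theorem stmt_8 (V : Type*) [NormedAddCommGroup V] [InnerProductSpace ℝ V]
    [FiniteDimensional ℝ V] (m : ℕ) (v : Fin m → V) (hv : ∀ i, v i ≠ 0)
    (W : Subgroup (V ≃ₗᵢ[ℝ] V))
    (hW : W = Subgroup.closure (Set.range fun i => Submodule.reflection ((ℝ ∙ v i)ᗮ)))
    (hperm : ∀ g ∈ W, ∀ i : Fin m, ∃ j : Fin m,
      Submodule.map (g.toLinearEquiv : V →ₗ[ℝ] V) ((ℝ ∙ v i)ᗮ) = (ℝ ∙ v j)ᗮ) :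
    Finite W ∧ Nat.card W ≤ (2 * m).factorial := by
  classical
  have hvn : ∀ i, ‖v i‖ ≠ 0 := fun i => norm_ne_zero_iff.mpr (hv i)
  set u : Fin m → V := fun i => ‖v i‖⁻¹ • v i with hu
  have hnu : ∀ i, ‖u i‖ = 1 := by
    intro i
    simp [hu, norm_smul, inv_mul_cancel₀ (hvn i), abs_of_nonneg (inv_nonneg.mpr (norm_nonneg _))]
  -- every element of W maps each u i to ± some u j
  have key : ∀ g : V ≃ₗᵢ[ℝ] V, g ∈ W → ∀ i, ∃ j, g (u i) = u j ∨ g (u i) = -u j := by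
    intro g hg i
    obtain ⟨j, hj⟩ := hperm g hg i
    have h1 : g (v i) ∈ (ℝ ∙ v j)ᗮᗮ := by
      rw [Submodule.mem_orthogonal]
      intro w hw
      rw [← hj] at hw
      obtain ⟨w', hw', rfl⟩ := hw
      have h2 : ((g.toLinearEquiv : V →ₗ[ℝ] V) w') = g w' := rfl
      rw [h2, g.inner_map_map]
      exact (Submodule.mem_orthogonal' _ _).mp hw' (v i) (Submodule.mem_span_singleton_self _)
    rw [Submodule.orthogonal_orthogonal] at h1
    have h3 : g (u i) ∈ ℝ ∙ v j := by
      have : g (u i) = ‖v i‖⁻¹ • g (v i) := by simp [hu]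
      rw [this]
      exact Submodule.smul_mem _ _ h1
    obtain ⟨c, hc⟩ := Submodule.mem_span_singleton.mp h3
    have hnorm : ‖g (u i)‖ = 1 := by rw [g.norm_map]; exact hnu i
    have habs : |c| * ‖v j‖ = 1 := by
      rw [← hc, norm_smul, Real.norm_eq_abs] at hnorm; exact hnorm
    have hcabs : |c| = ‖v j‖⁻¹ := eq_inv_of_mul_eq_one_left habs
    refine ⟨j, ?_⟩
    rcases abs_cases c with ⟨h, _⟩ | ⟨h, _⟩
    · left
      have hcv : c = ‖v j‖⁻¹ := h.symm.trans hcabs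
      rw [← hc, hcv, hu]
    · right
      have hcv : c = -‖v j‖⁻¹ := by rw [← hcabs]; linarith
      rw [← hc, hcv, hu, neg_smul]
  -- every element of W fixes (span (range v))ᗮ pointwise
  set U : Submodule ℝ V := Submodule.span ℝ (Set.range v) with hU
  have horth : ∀ i, Uᗮ ≤ (ℝ ∙ v i)ᗮ := by
    intro i
    apply Submodule.orthogonal_le
    rw [Submodule.span_singleton_le_iff_mem]
    exact Submodule.subset_span ⟨i, rfl⟩
  have hfix : ∀ g : V ≃ₗᵢ[ℝ] V, g ∈ W → ∀ x ∈ Uᗮ, g x = x := by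
    intro g hg
    rw [hW] at hg
    induction hg using Subgroup.closure_induction with
    | mem g hgmem =>
      obtain ⟨i, rfl⟩ := hgmem
      intro x hx
      exact Submodule.reflection_mem_subspace_eq_self (horth i hx)
    | one => intro x _; rfl
    | mul a b _ _ iha ihb => intro x hx; simp only [LinearIsometryEquiv.coe_mul,
        Function.comp_apply]; rw [ihb x hx, iha x hx]
    | inv a _ iha =>
      intro x hx
      have := iha x hx
      calc a⁻¹ x = a⁻¹ (a x) := by rw [this]
        _ = x := by simp
  -- if g ∈ W fixes all v i then g = 1
  have heqone : ∀ g : V ≃ₗᵢ[ℝ] V, g ∈ W → (∀ i, g (u i) = u i) → g = 1 := by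
    intro g hg hfixu
    have hfixv : ∀ i, g (v i) = v i := by
      intro i
      have h1 : v i = ‖v i‖ • u i := by rw [hu]; simp [smul_smul, mul_inv_cancel₀ (hvn i)]
      rw [h1, map_smul, hfixu]
    set F : Submodule ℝ V := LinearMap.eqLocus (g.toLinearEquiv : V →ₗ[ℝ] V) LinearMap.id with hF
    have hUF : U ≤ F := by
      rw [hU, Submodule.span_le]
      rintro _ ⟨i, rfl⟩
      exact hfixv i
    have hUoF : Uᗮ ≤ F := fun x hx => hfix g hg x hx
    have hFtop : F = ⊤ := by
      rw [eq_top_iff, ← Submodule.sup_orthogonal_of_hasOrthogonalProjection (K := U)]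
      exact sup_le hUF hUoF
    ext x
    have : x ∈ F := hFtop ▸ Submodule.mem_top
    exact this
  -- the finite set S of unit vectors
  set S : Set V := Set.range u ∪ Set.range (fun i => -u i) with hS
  have hSfin : S.Finite := (Set.finite_range u).union (Set.finite_range _)
  have hmapS : ∀ g : V ≃ₗᵢ[ℝ] V, g ∈ W → ∀ x ∈ S, g x ∈ S := by
    intro g hg x hx
    rcases hx with ⟨i, rfl⟩ | ⟨i, rfl⟩
    · obtain ⟨j, hj | hj⟩ := key g hg i
      · exact Or.inl ⟨j, hj.symm⟩
      · exact Or.inr ⟨j, hj.symm⟩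
    · obtain ⟨j, hj | hj⟩ := key g hg i
      · simp only [map_neg, hj]
        exact Or.inr ⟨j, rfl⟩
      · simp only [map_neg, hj, neg_neg]
        exact Or.inl ⟨j, rfl⟩
  haveI : Fintype S := hSfin.fintype
  -- injection from W into S ↪ S
  set Φ : W → (S ↪ S) := fun g =>
    ⟨fun x => ⟨(g : V ≃ₗᵢ[ℝ] V) x, hmapS g g.2 x x.2⟩,
      fun a b h => Subtype.ext ((g : V ≃ₗᵢ[ℝ] V).injective (congrArg Subtype.val h))⟩ with hΦ
  have hΦinj : Function.Injective Φ := by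
    intro g₁ g₂ h
    have hpt : ∀ x : S, (g₁ : V ≃ₗᵢ[ℝ] V) x = (g₂ : V ≃ₗᵢ[ℝ] V) x := by
      intro x
      have := congrFun (congrArg (fun e : S ↪ S => (e : S → S)) h) x
      exact congrArg Subtype.val this
    have hmem : (g₁⁻¹ * g₂ : W) = 1 := by
      apply Subtype.ext
      apply heqone _ (g₁⁻¹ * g₂).2
      intro i
      have hu' : (u i : V) ∈ S := Or.inl ⟨i, rfl⟩
      have := hpt ⟨u i, hu'⟩
      show ((g₁ : V ≃ₗᵢ[ℝ] V)⁻¹ * (g₂ : V ≃ₗᵢ[ℝ] V)) (u i) = u i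
      simp only [LinearIsometryEquiv.coe_mul, Function.comp_apply]
      rw [← this]
      exact (g₁ : V ≃ₗᵢ[ℝ] V).symm_apply_apply (u i)
    have := inv_mul_eq_one.mp hmem
    exact this.symm ▸ rfl
  have hWfin : Finite W := Finite.of_injective Φ hΦinj
  refine ⟨hWfin, ?_⟩
  have hcard1 : Nat.card W ≤ Nat.card (S ↪ S) := Nat.card_le_card_of_injective Φ hΦinj
  have hScard : Fintype.card S ≤ 2 * m := by
    have hsurj : Function.Surjective (fun p : Fin m ⊕ Fin m => (Sum.elim
        (fun i => (⟨u i, Or.inl ⟨i, rfl⟩⟩ : S))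
        (fun i => (⟨-u i, Or.inr ⟨i, rfl⟩⟩ : S)) p)) := by
      rintro ⟨x, ⟨i, rfl⟩ | ⟨i, rfl⟩⟩
      · exact ⟨Sum.inl i, rfl⟩
      · exact ⟨Sum.inr i, rfl⟩
    have := Fintype.card_le_of_surjective _ hsurj
    simpa [two_mul] using this
  have hemb : Nat.card (S ↪ S) = (Fintype.card S).factorial := by
    rw [Nat.card_eq_fintype_card, Fintype.card_embedding_eq, Nat.descFactorial_self]
  calc Nat.card W ≤ Nat.card (S ↪ S) := hcard1
    _ = (Fintype.card S).factorial := hemb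
    _ ≤ (2 * m).factorial := Nat.factorial_le hScard
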